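/- Let $\zeta$ be a symplectic quasi-state on a closed symplectic manifold satisfying the PB-inequality with constant $K$. Let $X_0, X_1, Y_0, Y_1$ be closed subsets with $X_0 \cap X_1 = Y_0 \cap Y_1 = \emptyset$ such that $X_0 \cup Y_0$, $Y_0 \cup X_1$, $X_1 \cup Y_1$, $Y_1 \cup X_0$ are all $\zeta$-superheavy. Then for every pair of smooth functions $F, G : M \to [0,1]$ with $F = 0$ on a neighborhood of $X_0$, $F = 1$ on a neighborhood of $X_1$, $G = 0$ on a neighborhood of $Y_0$, $G = 1$ on a neighborhood of $Y_1$, one has $\|\{F,G\}\| \geq 1/(4K)$. -/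
import Mathlib


open Set

/-- The sup-norm (uniform norm) `‖f‖_∞ = sup_{x ∈ M} |f(x)|` of a function. -/
noncomputable def supNorm {M : Type*} (f : M → ℝ) : ℝ := ⨆ x, |f x|

/-- An abstract model of a symplectic manifold `M`, recording the predicate of being a
smooth function on `M` and the Poisson bracket `{·,·}` on smooth functions, together with
its basic algebraic properties (ℝ-bilinearity, antisymmetry, and the Leibniz rule). -/
structure PoissonManifold (M : Type*) [TopologicalSpace M] where
  /-- `IsSmooth f` means `f ∈ C^∞(M)`. -/
  IsSmooth : (M → ℝ) → Prop
  /-- The Poisson bracket `{f, g}` associated to the symplectic form. -/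
  bracket : (M → ℝ) → (M → ℝ) → M → ℝ
  isSmooth_continuous : ∀ {f}, IsSmooth f → Continuous f
  isSmooth_const : ∀ c : ℝ, IsSmooth (fun _ => c)
  isSmooth_add : ∀ {f g}, IsSmooth f → IsSmooth g → IsSmooth (f + g)
  isSmooth_mul : ∀ {f g}, IsSmooth f → IsSmooth g → IsSmooth (f * g)
  isSmooth_smul : ∀ (c : ℝ) {f}, IsSmooth f → IsSmooth (c • f)
  isSmooth_bracket : ∀ {f g}, IsSmooth f → IsSmooth g → IsSmooth (bracket f g)
  bracket_add_left : ∀ f g h, bracket (f + g) h = bracket f h + bracket g h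
  bracket_smul_left : ∀ (c : ℝ) f g, bracket (c • f) g = c • bracket f g
  bracket_antisymm : ∀ f g, bracket f g = - bracket g f
  bracket_leibniz : ∀ f g h, bracket (f * g) h = f * bracket g h + g * bracket f h

/-- A symplectic quasi-state on a closed symplectic manifold: a normalized, positive
functional on continuous functions which is linear on Poisson-commutative subspaces. -/
structure QuasiState {M : Type*} [TopologicalSpace M] (P : PoissonManifold M) where
  val : (M → ℝ) → ℝ
  normalized : val (fun _ => 1) = 1
  positive : ∀ F : M → ℝ, Continuous F → (∀ x, 0 ≤ F x) → 0 ≤ val F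
  monotone : ∀ F G : M → ℝ, Continuous F → Continuous G →
    (∀ x, F x ≤ G x) → val F ≤ val G
  quasi_additive : ∀ F G : M → ℝ, P.IsSmooth F → P.IsSmooth G →
    P.bracket F G = 0 → val (F + G) = val F + val G
  homogeneous : ∀ (c : ℝ) (F : M → ℝ), Continuous F → val (c • F) = c * val F

/-- A closed set `X` is superheavy for the quasi-state `ζ`: `ζ(F) ≥ c` whenever
`F ≥ c` on `X`, and `ζ(F) ≤ c` whenever `F ≤ c` on `X`. -/
def Superheavy {M : Type*} [TopologicalSpace M] {P : PoissonManifold M}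
    (zeta : QuasiState P) (X : Set M) : Prop :=
  (∀ (F : M → ℝ), Continuous F → ∀ c : ℝ, (∀ x ∈ X, c ≤ F x) → c ≤ zeta.val F) ∧
  (∀ (F : M → ℝ), Continuous F → ∀ c : ℝ, (∀ x ∈ X, F x ≤ c) → zeta.val F ≤ c)


section Aux

variable {M : Type*} [TopologicalSpace M] (P : PoissonManifold M)

lemma br_one_left (g : M → ℝ) : P.bracket 1 g = 0 := by
  have h := P.bracket_leibniz 1 1 g
  rw [one_mul, one_mul] at h
  exact (add_eq_left.mp h.symm)

lemma br_const_left (c : ℝ) (g : M → ℝ) : P.bracket (fun _ => c) g = 0 := by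
  have hc : (fun _ : M => c) = c • (1 : M → ℝ) := by funext x; simp
  rw [hc, P.bracket_smul_left, br_one_left]; simp

lemma br_one_right (g : M → ℝ) : P.bracket g 1 = 0 := by
  rw [P.bracket_antisymm, br_one_left]; simp

lemma br_self (f : M → ℝ) : P.bracket f f = 0 := by
  funext x
  have h := congrFun (P.bracket_antisymm f f) x
  simp only [Pi.neg_apply] at h
  simp only [Pi.zero_apply]
  linarith

lemma br_neg_left (f g : M → ℝ) : P.bracket (-f) g = -P.bracket f g := by
  have h := P.bracket_smul_left (-1) f g
  simpa [neg_one_smul] using h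

lemma br_add_right (f g h : M → ℝ) :
    P.bracket f (g + h) = P.bracket f g + P.bracket f h := by
  rw [P.bracket_antisymm f (g + h), P.bracket_add_left, P.bracket_antisymm f g,
    P.bracket_antisymm f h]
  ring

lemma br_neg_right (f g : M → ℝ) : P.bracket f (-g) = -P.bracket f g := by
  rw [P.bracket_antisymm f (-g), br_neg_left, P.bracket_antisymm f g]

lemma br_sub_left (f g h : M → ℝ) :
    P.bracket (f - g) h = P.bracket f h - P.bracket g h := by
  rw [sub_eq_add_neg, P.bracket_add_left, br_neg_left, ← sub_eq_add_neg]

lemma br_sub_right (f g h : M → ℝ) :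
    P.bracket f (g - h) = P.bracket f g - P.bracket f h := by
  rw [sub_eq_add_neg, br_add_right, br_neg_right, ← sub_eq_add_neg]

lemma br_mul_right (f g h : M → ℝ) :
    P.bracket f (g * h) = g * P.bracket f h + h * P.bracket f g := by
  rw [P.bracket_antisymm f (g * h), P.bracket_leibniz, P.bracket_antisymm f h,
    P.bracket_antisymm f g]
  ring

lemma isSmooth_one : P.IsSmooth (1 : M → ℝ) := P.isSmooth_const 1

lemma isSmooth_neg {f : M → ℝ} (hf : P.IsSmooth f) : P.IsSmooth (-f) := by
  have h := P.isSmooth_smul (-1) hf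
  rwa [neg_one_smul] at h

lemma isSmooth_sub {f g : M → ℝ} (hf : P.IsSmooth f) (hg : P.IsSmooth g) :
    P.IsSmooth (f - g) := by
  rw [sub_eq_add_neg]; exact P.isSmooth_add hf (isSmooth_neg P hg)

lemma supNorm_nonneg (f : M → ℝ) : 0 ≤ supNorm f :=
  Real.iSup_nonneg fun x => abs_nonneg _

lemma supNorm_le_supNorm [CompactSpace M] [Nonempty M] {f g : M → ℝ}
    (hg : Continuous g) (h : ∀ x, |f x| ≤ |g x|) : supNorm f ≤ supNorm g :=
  ciSup_mono (isCompact_range hg.abs).bddAbove h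

end Aux

/-- Let `ζ` be a symplectic quasi-state on a closed symplectic manifold
satisfying the PB-inequality with constant `K`. If `X₀ ∪ Y₀`, `Y₀ ∪ X₁`, `X₁ ∪ Y₁`,
`Y₁ ∪ X₀` are all superheavy and `X₀ ∩ X₁ = Y₀ ∩ Y₁ = ∅`, then for any smooth
`F, G : M → [0,1]` with `F = 0` near `X₀`, `F = 1` near `X₁`, `G = 0` near `Y₀`,
`G = 1` near `Y₁`, one has `‖{F,G}‖_∞ ≥ 1/(4K)`. -/
theorem pb4_ge_of_superheavy_quadruple
    {M : Type*} [TopologicalSpace M] [CompactSpace M] (P : PoissonManifold M)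
    (zeta : QuasiState P) (K : ℝ) (hK : 0 < K)
    (hPB : ∀ F G : M → ℝ, P.IsSmooth F → P.IsSmooth G →
      |zeta.val (F + G) - zeta.val F - zeta.val G|
        ≤ Real.sqrt (K * supNorm (P.bracket F G)))
    (X0 X1 Y0 Y1 : Set M)
    (hX0 : IsClosed X0) (hX1 : IsClosed X1) (hY0 : IsClosed Y0) (hY1 : IsClosed Y1)
    (hX : X0 ∩ X1 = ∅) (hY : Y0 ∩ Y1 = ∅)
    (h1 : Superheavy zeta (X0 ∪ Y0)) (h2 : Superheavy zeta (Y0 ∪ X1))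
    (h3 : Superheavy zeta (X1 ∪ Y1)) (h4 : Superheavy zeta (Y1 ∪ X0))
    (F G : M → ℝ) (hF : P.IsSmooth F) (hG : P.IsSmooth G)
    (hF01 : ∀ x, F x ∈ Icc (0:ℝ) 1) (hG01 : ∀ x, G x ∈ Icc (0:ℝ) 1)
    (hFX0 : ∃ U, IsOpen U ∧ X0 ⊆ U ∧ ∀ x ∈ U, F x = 0)
    (hFX1 : ∃ U, IsOpen U ∧ X1 ⊆ U ∧ ∀ x ∈ U, F x = 1)
    (hGY0 : ∃ U, IsOpen U ∧ Y0 ⊆ U ∧ ∀ x ∈ U, G x = 0)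
    (hGY1 : ∃ U, IsOpen U ∧ Y1 ⊆ U ∧ ∀ x ∈ U, G x = 1) :
    1 / (4 * K) ≤ supNorm (P.bracket F G) := by
  rcases isEmpty_or_nonempty M with hM | hM
  · exfalso
    have hsm : ((0:ℝ) • fun _ : M => (1:ℝ)) = fun _ : M => (0:ℝ) := by
      funext x; simp
    have h0 : zeta.val (fun _ => (0:ℝ)) = 0 := by
      have h := zeta.homogeneous 0 (fun _ => 1) continuous_const
      rw [hsm] at h; rw [h]; ring
    have hle : zeta.val (fun _ => (1:ℝ)) ≤ zeta.val (fun _ => (0:ℝ)) :=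
      zeta.monotone _ _ continuous_const continuous_const (fun x => hM.elim x)
    rw [zeta.normalized, h0] at hle
    linarith
  · set B : M → ℝ := P.bracket F G with hB
    set N : ℝ := supNorm B with hNdef
    have hN0 : 0 ≤ N := supNorm_nonneg B
    -- the four functions
    -- u1 = F*G, u2 = G - F*G, u3 = 1 - F - G + F*G, u4 = F - F*G
    have hs1 : P.IsSmooth (F * G) := P.isSmooth_mul hF hG
    have hs2 : P.IsSmooth (G - F * G) := isSmooth_sub P hG hs1
    have hs3 : P.IsSmooth (1 - F - G + F * G) :=
      P.isSmooth_add (isSmooth_sub P (isSmooth_sub P (isSmooth_one P) hF) hG) hs1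
    have hs4 : P.IsSmooth (F - F * G) := isSmooth_sub P hF hs1
    have hc1 := P.isSmooth_continuous hs1
    have hc2 := P.isSmooth_continuous hs2
    have hc3 := P.isSmooth_continuous hs3
    have hc4 := P.isSmooth_continuous hs4
    have hcB : Continuous B := P.isSmooth_continuous (P.isSmooth_bracket hF hG)
    -- vanishing of the u_i on superheavy sets, hence zeta(u_i) = 0
    obtain ⟨U0, _, hU0s, hU0v⟩ := hFX0
    obtain ⟨U1, _, hU1s, hU1v⟩ := hFX1
    obtain ⟨V0, _, hV0s, hV0v⟩ := hGY0
    obtain ⟨V1, _, hV1s, hV1v⟩ := hGY1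
    have hvan1 : ∀ x ∈ X0 ∪ Y0, (F * G) x = 0 := by
      rintro x (hx | hx) <;> simp only [Pi.mul_apply]
      · rw [hU0v x (hU0s hx)]; ring
      · rw [hV0v x (hV0s hx)]; ring
    have hvan2 : ∀ x ∈ Y0 ∪ X1, (G - F * G) x = 0 := by
      rintro x (hx | hx) <;> simp only [Pi.sub_apply, Pi.mul_apply]
      · rw [hV0v x (hV0s hx)]; ring
      · rw [hU1v x (hU1s hx)]; ring
    have hvan3 : ∀ x ∈ X1 ∪ Y1, (1 - F - G + F * G) x = 0 := by
      rintro x (hx | hx) <;>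
        simp only [Pi.add_apply, Pi.sub_apply, Pi.mul_apply, Pi.one_apply]
      · rw [hU1v x (hU1s hx)]; ring
      · rw [hV1v x (hV1s hx)]; ring
    have hvan4 : ∀ x ∈ Y1 ∪ X0, (F - F * G) x = 0 := by
      rintro x (hx | hx) <;> simp only [Pi.sub_apply, Pi.mul_apply]
      · rw [hV1v x (hV1s hx)]; ring
      · rw [hU0v x (hU0s hx)]; ring
    have hz1 : zeta.val (F * G) = 0 :=
      le_antisymm (h1.2 _ hc1 0 fun x hx => (hvan1 x hx).le)
        (h1.1 _ hc1 0 fun x hx => (hvan1 x hx).ge)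
    have hz2 : zeta.val (G - F * G) = 0 :=
      le_antisymm (h2.2 _ hc2 0 fun x hx => (hvan2 x hx).le)
        (h2.1 _ hc2 0 fun x hx => (hvan2 x hx).ge)
    have hz3 : zeta.val (1 - F - G + F * G) = 0 :=
      le_antisymm (h3.2 _ hc3 0 fun x hx => (hvan3 x hx).le)
        (h3.1 _ hc3 0 fun x hx => (hvan3 x hx).ge)
    have hz4 : zeta.val (F - F * G) = 0 :=
      le_antisymm (h4.2 _ hc4 0 fun x hx => (hvan4 x hx).le)
        (h4.1 _ hc4 0 fun x hx => (hvan4 x hx).ge)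
    -- bracket computations
    have hGF : P.bracket G F = -P.bracket F G := P.bracket_antisymm G F
    have hbr23 : P.bracket (G - F * G) (1 - F - G + F * G) = (1 - F) * P.bracket F G := by
      simp only [br_sub_left, br_sub_right, br_add_right, P.bracket_add_left,
        P.bracket_leibniz, br_mul_right, br_one_left, br_one_right, br_self, hGF]
      ring
    have hbr234 : P.bracket ((G - F * G) + (1 - F - G + F * G)) (F - F * G)
        = F * P.bracket F G := by
      simp only [br_sub_left, br_sub_right, br_add_right, P.bracket_add_left,
        P.bracket_leibniz, br_mul_right, br_one_left, br_one_right, br_self, hGF]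
      ring
    have hbr1rest : P.bracket (F * G)
        ((G - F * G) + (1 - F - G + F * G) + (F - F * G)) = 0 := by
      simp only [br_sub_left, br_sub_right, br_add_right, P.bracket_add_left,
        P.bracket_leibniz, br_mul_right, br_one_left, br_one_right, br_self, hGF]
      ring
    -- total value is 1
    have hval1 : zeta.val ((G - F * G) + (1 - F - G + F * G) + (F - F * G)) = 1 := by
      have hq := zeta.quasi_additive (F * G) _ hs1
        (P.isSmooth_add (P.isSmooth_add hs2 hs3) hs4) hbr1rest
      have hsum : (F * G) + ((G - F * G) + (1 - F - G + F * G) + (F - F * G))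
          = fun _ : M => (1:ℝ) := by
        funext x
        simp only [Pi.add_apply, Pi.sub_apply, Pi.mul_apply, Pi.one_apply]
        ring
      rw [hsum, zeta.normalized, hz1] at hq
      linarith
    -- sup-norm bounds
    have hsn23 : supNorm ((1 - F) * B) ≤ N := by
      apply supNorm_le_supNorm hcB
      intro x
      have h01 := hF01 x
      simp only [Pi.mul_apply, Pi.sub_apply, Pi.one_apply]
      rw [abs_mul]
      calc |1 - F x| * |B x| ≤ 1 * |B x| := by
            apply mul_le_mul_of_nonneg_right _ (abs_nonneg _)
            rw [abs_le]; constructor <;> [linarith [h01.2]; linarith [h01.1]]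
        _ = |B x| := one_mul _
    have hsn234 : supNorm (F * B) ≤ N := by
      apply supNorm_le_supNorm hcB
      intro x
      have h01 := hF01 x
      simp only [Pi.mul_apply]
      rw [abs_mul]
      calc |F x| * |B x| ≤ 1 * |B x| := by
            apply mul_le_mul_of_nonneg_right _ (abs_nonneg _)
            rw [abs_le]; constructor <;> [linarith [h01.1]; linarith [h01.2]]
        _ = |B x| := one_mul _
    have hsqmono23 : Real.sqrt (K * supNorm ((1 - F) * B)) ≤ Real.sqrt (K * N) :=
      Real.sqrt_le_sqrt (mul_le_mul_of_nonneg_left hsn23 hK.le)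
    have hsqmono234 : Real.sqrt (K * supNorm (F * B)) ≤ Real.sqrt (K * N) :=
      Real.sqrt_le_sqrt (mul_le_mul_of_nonneg_left hsn234 hK.le)
    -- PB inequality twice
    have hPB23 := hPB (G - F * G) (1 - F - G + F * G) hs2 hs3
    rw [hz2, hz3, hbr23] at hPB23
    have hPB234 := hPB ((G - F * G) + (1 - F - G + F * G)) (F - F * G)
      (P.isSmooth_add hs2 hs3) hs4
    rw [hz4, hbr234, hval1] at hPB234
    set s := zeta.val ((G - F * G) + (1 - F - G + F * G)) with hs
    have h23 : |s - 0 - 0| ≤ Real.sqrt (K * N) := le_trans hPB23 hsqmono23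
    have h234 : |1 - s - 0| ≤ Real.sqrt (K * N) := le_trans hPB234 hsqmono234
    rw [abs_le] at h23 h234
    have hhalf : 1 / 2 ≤ Real.sqrt (K * N) := by
      rcases h23 with ⟨_, h23u⟩
      rcases h234 with ⟨h234l, _⟩
      linarith
    have hsq : (1 / 2 : ℝ) ^ 2 ≤ Real.sqrt (K * N) ^ 2 :=
      pow_le_pow_left₀ (by norm_num) hhalf 2
    rw [Real.sq_sqrt (mul_nonneg hK.le hN0)] at hsq
    rw [div_le_iff₀ (by positivity : (0:ℝ) < 4 * K)]
    nlinarith
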